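/- Let γ > −1 and define v_n = (γ+n+1)/(γ+1) if n is even and v_n = (n+1)/(γ+1) if n is odd (so v_0 = 1, v_1 = 2/(γ+1)). Then the associated coefficient sequence satisfies ε_1 = 1 and, for every m ≥ 2, ε_m = ((−2)^{m-1}/m!) · γ/(γ+1). -/

import Mathlib

open Finset

lemma lemA (k : ℕ) : ∑ j ∈ Finset.range (k+1), (-2:ℝ)^j * (k.choose j) = (-1)^k := by
  have h := add_pow (-2:ℝ) 1 k
  norm_num at h
  exact h.symm

lemma lemC (k : ℕ) (hk : 2 ≤ k) :
    ∑ j ∈ Finset.Icc 2 (k-1), (-2:ℝ)^j * (k.choose j)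
      = (-1:ℝ)^k - 1 + 2*k - (-2)^k := by
  have hIcc : Finset.Icc 2 (k-1) = Finset.Ico 2 k := by
    ext x; simp [Finset.mem_Icc, Finset.mem_Ico]; omega
  have h1 : ∑ j ∈ Finset.range (k+1), (-2:ℝ)^j * (k.choose j)
      = (∑ j ∈ Finset.Ico 0 2, (-2:ℝ)^j * (k.choose j))
        + ∑ j ∈ Finset.Ico 2 (k+1), (-2:ℝ)^j * (k.choose j) := by
    rw [Finset.range_eq_Ico, ← Finset.sum_Ico_consecutive _ (by omega) (by omega : 2 ≤ k+1)]
  have h2 : ∑ j ∈ Finset.Ico 2 (k+1), (-2:ℝ)^j * (k.choose j)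
      = (∑ j ∈ Finset.Ico 2 k, (-2:ℝ)^j * (k.choose j)) + (-2)^k * (k.choose k) := by
    rw [Finset.sum_Ico_succ_top (by omega : 2 ≤ k)]
  have h3 : ∑ j ∈ Finset.Ico 0 2, (-2:ℝ)^j * (k.choose j) = 1 - 2*k := by
    rw [show Finset.Ico 0 2 = Finset.range 2 from rfl]
    simp [Finset.sum_range_succ]
    ring
  rw [lemA, h2, h3, Nat.choose_self] at h1
  rw [hIcc]
  push_cast at h1 ⊢
  linarith

theorem stmt_11 (γ : ℝ) (hγ : -1 < γ) (v : ℕ → ℝ)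
    (hv : ∀ n : ℕ, v n = if Even n then (γ + (n : ℝ) + 1) / (γ + 1)
                         else ((n : ℝ) + 1) / (γ + 1))
    (ε : ℕ → ℝ) (hε1 : ε 1 = 1)
    (hεk : ∀ k : ℕ, 2 ≤ k →
      ε k = v (k - 1) / (Nat.factorial k : ℝ)
        - ∑ j ∈ Finset.Icc 1 (k - 1), ε j / (Nat.factorial (k - j) : ℝ)) :
    ε 1 = 1 ∧
    ∀ m : ℕ, 2 ≤ m →
      ε m = (-2 : ℝ) ^ (m - 1) / (Nat.factorial m : ℝ) * (γ / (γ + 1)) := by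
  have hγ1 : (γ:ℝ) + 1 ≠ 0 := by linarith
  refine ⟨hε1, ?_⟩
  intro m
  induction m using Nat.strong_induction_on with
  | _ k IH =>
  intro hk
  have hkfact : (k.factorial : ℝ) ≠ 0 := Nat.cast_ne_zero.2 k.factorial_ne_zero
  rw [hεk k hk]
  have hsplit : Finset.Icc 1 (k-1) = insert 1 (Finset.Icc 2 (k-1)) := by
    ext x; simp [Finset.mem_Icc]; omega
  rw [hsplit, Finset.sum_insert (by simp)]
  rw [hε1]
  have hsum : ∑ j ∈ Finset.Icc 2 (k-1), ε j / ((k-j).factorial : ℝ)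
      = (γ/(γ+1)) / (k.factorial:ℝ) * ∑ j ∈ Finset.Icc 2 (k-1), (-2:ℝ)^(j-1) * (k.choose j) := by
    rw [Finset.mul_sum]
    refine Finset.sum_congr rfl ?_
    intro j hj
    simp only [Finset.mem_Icc] at hj
    rw [IH j (by omega) (by omega)]
    have hjk : j ≤ k := by omega
    have hfact : ((k.choose j : ℝ)) * (j.factorial:ℝ) * ((k-j).factorial:ℝ) = (k.factorial:ℝ) := by
      exact_mod_cast congrArg (Nat.cast : ℕ → ℝ) (Nat.choose_mul_factorial_mul_factorial hjk)
    have h1 : (j.factorial:ℝ) ≠ 0 := Nat.cast_ne_zero.2 j.factorial_ne_zero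
    have h2 : ((k-j).factorial:ℝ) ≠ 0 := Nat.cast_ne_zero.2 (k-j).factorial_ne_zero
    field_simp
    linear_combination (-γ) * hfact
  rw [hsum]
  have hpow : ∑ j ∈ Finset.Icc 2 (k-1), (-2:ℝ)^(j-1) * (k.choose j)
      = (-1/2) * (((-1:ℝ)^k - 1 + 2*k - (-2)^k)) := by
    rw [← lemC k hk, Finset.mul_sum]
    refine Finset.sum_congr rfl ?_
    intro j hj
    simp only [Finset.mem_Icc] at hj
    have hj1 : (-2:ℝ)^j = (-2)^(j-1) * (-2) := by
      conv_lhs => rw [show j = (j-1)+1 from by omega, pow_succ]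
    rw [hj1]; ring
  rw [hpow]
  have hk1 : k = (k-1) + 1 := by omega
  have hfk : (k.factorial : ℝ) = k * ((k-1).factorial : ℝ) := by
    conv_lhs => rw [hk1]
    rw [Nat.factorial_succ]
    push_cast [Nat.cast_sub (by omega : 1 ≤ k)]
    ring
  have hk1fact : ((k-1).factorial : ℝ) ≠ 0 := Nat.cast_ne_zero.2 (k-1).factorial_ne_zero
  have hkR : ((k:ℝ)) ≠ 0 := Nat.cast_ne_zero.2 (by omega)
  have hpowk : (-2:ℝ)^k = (-2)^(k-1) * (-2) := by
    conv_lhs => rw [hk1, pow_succ]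
  rw [hv]
  have hcast : ((k-1 : ℕ) : ℝ) = (k:ℝ) - 1 := by
    push_cast [Nat.cast_sub (by omega : 1 ≤ k)]; ring
  rcases Nat.even_or_odd k with hke | hko
  · have hodd : ¬ Even (k-1) := by
      rintro ⟨s, hs⟩; rcases hke with ⟨t, ht⟩; omega
    have hm1 : (-1:ℝ)^k = 1 := hke.neg_one_pow
    rw [if_neg hodd, hcast, hm1, hpowk, hfk]
    field_simp
    ring
  · have heven : Even (k-1) := by
      rcases hko with ⟨t, ht⟩; exact ⟨t, by omega⟩
    have hm1 : (-1:ℝ)^k = -1 := hko.neg_one_pow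
    rw [if_pos heven, hcast, hm1, hpowk, hfk]
    field_simp
    ring
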